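/- Let G be a triangle-free graph, let v be a vertex, and let P be an induced cycle of length 5 with all vertices in N^2(v), the set of vertices at distance exactly 2 from v. Then G contains an induced cycle of length 6. -/

import Mathlib

/-- `G` has an induced cycle (hole) of length `n`. -/
def HasInducedCycle {V : Type*} (G : SimpleGraph V) (n : ℕ) : Prop :=
  ∃ f : ZMod n → V, Function.Injective f ∧
    ∀ i j : ZMod n, G.Adj (f i) (f j) ↔ (j = i + 1 ∨ i = j + 1)

/-- if a triangle-free graph has an induced 5-cycle all of whose
vertices lie at distance exactly 2 from a vertex `v`, then it contains an
induced cycle of length 6. -/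
lemma hexagon {V : Type*} (G : SimpleGraph V) (a0 a1 a2 a3 a4 a5 : V)
    (e01 : G.Adj a0 a1) (e12 : G.Adj a1 a2) (e23 : G.Adj a2 a3)
    (e34 : G.Adj a3 a4) (e45 : G.Adj a4 a5) (e50 : G.Adj a5 a0)
    (n02 : ¬ G.Adj a0 a2) (n03 : ¬ G.Adj a0 a3) (n04 : ¬ G.Adj a0 a4)
    (n13 : ¬ G.Adj a1 a3) (n14 : ¬ G.Adj a1 a4) (n15 : ¬ G.Adj a1 a5)
    (n24 : ¬ G.Adj a2 a4) (n25 : ¬ G.Adj a2 a5) (n35 : ¬ G.Adj a3 a5) :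
    HasInducedCycle G 6 := by
  have e10 := e01.symm; have e21 := e12.symm; have e32 := e23.symm
  have e43 := e34.symm; have e54 := e45.symm; have e05 := e50.symm
  have n20 : ¬ G.Adj a2 a0 := fun h => n02 h.symm
  have n30 : ¬ G.Adj a3 a0 := fun h => n03 h.symm
  have n40 : ¬ G.Adj a4 a0 := fun h => n04 h.symm
  have n31 : ¬ G.Adj a3 a1 := fun h => n13 h.symm
  have n41 : ¬ G.Adj a4 a1 := fun h => n14 h.symm
  have n51 : ¬ G.Adj a5 a1 := fun h => n15 h.symm
  have n42 : ¬ G.Adj a4 a2 := fun h => n24 h.symm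
  have n52 : ¬ G.Adj a5 a2 := fun h => n25 h.symm
  have n53 : ¬ G.Adj a5 a3 := fun h => n35 h.symm
  have d01 := e01.ne; have d12 := e12.ne; have d23 := e23.ne
  have d34 := e34.ne; have d45 := e45.ne; have d05 := e50.ne.symm
  have d02 : a0 ≠ a2 := fun h => n03 (h ▸ e23)
  have d03 : a0 ≠ a3 := fun h => n04 (h ▸ e34)
  have d04 : a0 ≠ a4 := fun h => n03 (h ▸ e43)
  have d13 : a1 ≠ a3 := fun h => n14 (h ▸ e34)
  have d14 : a1 ≠ a4 := fun h => n15 (h ▸ e45)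
  have d15 : a1 ≠ a5 := fun h => n14 (h ▸ e54)
  have d24 : a2 ≠ a4 := fun h => n25 (h ▸ e45)
  have d25 : a2 ≠ a5 := fun h => n20 (h ▸ e50)
  have d35 : a3 ≠ a5 := fun h => n30 (h ▸ e50)
  have d10 := d01.symm; have d21 := d12.symm; have d32 := d23.symm
  have d43 := d34.symm; have d54 := d45.symm; have d50 := d05.symm
  have d20 := d02.symm; have d30 := d03.symm; have d40 := d04.symm
  have d31 := d13.symm; have d41 := d14.symm; have d51 := d15.symm
  have d42 := d24.symm; have d52 := d25.symm; have d53 := d35.symm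
  set g : ZMod 6 → V := fun k => if k = 0 then a0 else if k = 1 then a1
    else if k = 2 then a2 else if k = 3 then a3 else if k = 4 then a4 else a5 with hg
  have h0 : g 0 = a0 := by simp [hg]
  have h1 : g 1 = a1 := by simp [hg, show (1:ZMod 6) ≠ 0 by decide]
  have h2 : g 2 = a2 := by simp [hg, show (2:ZMod 6) ≠ 0 by decide, show (2:ZMod 6) ≠ 1 by decide]
  have h3 : g 3 = a3 := by simp [hg, show (3:ZMod 6) ≠ 0 by decide, show (3:ZMod 6) ≠ 1 by decide, show (3:ZMod 6) ≠ 2 by decide]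
  have h4 : g 4 = a4 := by simp [hg, show (4:ZMod 6) ≠ 0 by decide, show (4:ZMod 6) ≠ 1 by decide, show (4:ZMod 6) ≠ 2 by decide, show (4:ZMod 6) ≠ 3 by decide]
  have h5 : g 5 = a5 := by simp [hg, show (5:ZMod 6) ≠ 0 by decide, show (5:ZMod 6) ≠ 1 by decide, show (5:ZMod 6) ≠ 2 by decide, show (5:ZMod 6) ≠ 3 by decide, show (5:ZMod 6) ≠ 4 by decide]
  have hall : ∀ i : ZMod 6, i = 0 ∨ i = 1 ∨ i = 2 ∨ i = 3 ∨ i = 4 ∨ i = 5 := by decide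
  refine ⟨g, ?_, ?_⟩
  · intro i j hab
    rcases hall i with rfl|rfl|rfl|rfl|rfl|rfl <;>
      rcases hall j with rfl|rfl|rfl|rfl|rfl|rfl <;>
      simp only [h0, h1, h2, h3, h4, h5] at hab <;>
      first | rfl | exact absurd hab (by assumption)
  · intro i j
    rcases hall i with rfl|rfl|rfl|rfl|rfl|rfl <;>
      rcases hall j with rfl|rfl|rfl|rfl|rfl|rfl <;>
      simp only [h0, h1, h2, h3, h4, h5] <;>
      first
        | exact iff_of_false G.irrefl (by decide)
        | exact iff_of_true (by assumption) (by decide)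
        | exact iff_of_false (by assumption) (by decide)

theorem stmt_3 {V : Type*} (G : SimpleGraph V) (hTF : G.CliqueFree 3) (v : V)
    (f : ZMod 5 → V) (hinj : Function.Injective f)
    (hdist : ∀ i : ZMod 5, G.dist v (f i) = 2)
    (hadj : ∀ i j : ZMod 5, G.Adj (f i) (f j) ↔ (j = i + 1 ∨ i = j + 1)) :
    HasInducedCycle G 6 := by
  classical
  have htri : ∀ a b c : V, G.Adj a b → G.Adj a c → G.Adj b c → False := fun a b c h1 h2 h3 =>
    hTF {a, b, c} (SimpleGraph.is3Clique_triple_iff.2 ⟨h1, h2, h3⟩)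
  have eadj : ∀ i : ZMod 5, G.Adj (f i) (f (i + 1)) := fun i => (hadj i (i + 1)).2 (Or.inl rfl)
  have eadj' : ∀ i j : ZMod 5, j = i + 1 → G.Adj (f i) (f j) := fun i j h =>
    (hadj i j).2 (Or.inl h)
  have tri2 : ∀ (w : V) (a b : ZMod 5), b = a + 1 → G.Adj w (f a) → G.Adj w (f b) → False :=
    fun w a b hb h1 h2 => htri w (f a) (f b) h1 h2 (eadj' a b hb)
  have hnv : ∀ j : ZMod 5, ¬ G.Adj v (f j) := by
    intro j h
    have h1 : G.dist v (f j) = 1 := SimpleGraph.dist_eq_one_iff_adj.2 h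
    rw [hdist j] at h1
    norm_num at h1
  have hnbr : ∀ j : ZMod 5, ∃ u, G.Adj v u ∧ G.Adj u (f j) := by
    intro j
    obtain ⟨p, hp⟩ := SimpleGraph.exists_walk_of_dist_ne_zero
      (show G.dist v (f j) ≠ 0 by rw [hdist j]; norm_num)
    rw [hdist j] at hp
    cases p with
    | nil => simp at hp
    | cons h1 q =>
      cases q with
      | nil => simp at hp
      | cons h2 r =>
        cases r with
        | nil => exact ⟨_, h1, h2⟩
        | cons h3 s => simp [SimpleGraph.Walk.length_cons] at hp
  have nfadj : ∀ i : ZMod 5, ¬ G.Adj (f i) (f (i + 2)) := by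
    intro i h
    rcases (hadj i (i + 2)).1 h with h' | h'
    · exact absurd (add_left_cancel h') (by decide)
    · have h'' : i + 0 = i + (2 + 1) := by rw [add_zero, ← add_assoc]; exact h'
      exact absurd (add_left_cancel h'') (by decide)
  -- Claim A
  have hA : ∃ (i : ZMod 5) (u u' : V), G.Adj v u ∧ G.Adj v u' ∧ G.Adj u (f i) ∧
      G.Adj u' (f (i + 2)) ∧ ¬ G.Adj u (f (i + 2)) ∧ ¬ G.Adj u' (f i) := by
    by_contra hcon
    push_neg at hcon
    choose u hu1 hu2 using hnbr
    have H : ∀ (i : ZMod 5) (a b : V), G.Adj v a → G.Adj v b → G.Adj a (f i) →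
        G.Adj b (f (i + 2)) → ¬ G.Adj a (f (i + 2)) → G.Adj b (f i) := hcon
    -- propagation step: if u j is adjacent to f (j+3), then u (j+2) is adjacent to f (j+2+3)
    have step : ∀ j : ZMod 5, G.Adj (u j) (f (j + 3)) → G.Adj (u (j + 2)) (f ((j + 2) + 3)) := by
      intro j hj
      have key : ¬ G.Adj (u j) (f (j + 2)) := by
        intro h
        exact tri2 (u j) (j + 2) (j + 3) (by rw [add_assoc]; norm_num) h hj
      have := H j (u j) (u (j + 2)) (hu1 j) (hu1 (j + 2)) (hu2 j) (hu2 (j + 2)) key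
      have e : (j + 2) + 3 = j := by
        rw [add_assoc, show (2 : ZMod 5) + 3 = 0 by decide, add_zero]
      rwa [e]
    by_cases hP : G.Adj (u 0) (f 2)
    · -- u 0 ~ f 0 and f 2 : apply H at index 2 with (u 0, u 4)
      have h4 : G.Adj (u 4) (f (4 + 3)) := by
        have key : ¬ G.Adj (u 0) (f (2 + 2)) := by
          intro h
          exact tri2 (u 0) (2 + 2) 0 (by decide) h (hu2 0)
        have := H 2 (u 0) (u (2 + 2)) (hu1 0) (hu1 (2 + 2)) hP (hu2 (2 + 2)) key
        show G.Adj (u 4) (f (4 + 3))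
        rwa [show ((4 : ZMod 5) + 3) = 2 from by decide]
      have h1 : G.Adj (u 1) (f (1 + 3)) := by
        have := step 4 h4
        rwa [show ((4 : ZMod 5) + 2) = 1 from by decide] at this
      have h3 : G.Adj (u 3) (f (3 + 3)) := by
        have := step 1 h1
        rwa [show ((1 : ZMod 5) + 2) = 3 from by decide] at this
      have h0 : G.Adj (u 0) (f (0 + 3)) := by
        have := step 3 h3
        rwa [show ((3 : ZMod 5) + 2) = 0 from by decide] at this
      -- u 0 ~ f 2 and f 3 : triangle
      exact tri2 (u 0) 2 (0 + 3) (by decide) hP h0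
    · -- u 2 ~ f 0 and f 2
      have h2 : G.Adj (u 2) (f (2 + 3)) := by
        have := H 0 (u 0) (u 2) (hu1 0) (hu1 2) (hu2 0)
          (by rw [show ((0:ZMod 5) + 2) = 2 from by decide]; exact hu2 2) hP
        rwa [show ((2 : ZMod 5) + 3) = 0 from by decide]
      have h4 : G.Adj (u 4) (f (4 + 3)) := by
        have := step 2 h2
        rwa [show ((2 : ZMod 5) + 2) = 4 from by decide] at this
      have h1 : G.Adj (u 1) (f (1 + 3)) := by
        have := step 4 h4
        rwa [show ((4 : ZMod 5) + 2) = 1 from by decide] at this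
      have h3 : G.Adj (u 3) (f (3 + 3)) := by
        have := step 1 h1
        rwa [show ((1 : ZMod 5) + 2) = 3 from by decide] at this
      have h0 : G.Adj (u 0) (f (0 + 3)) := by
        have := step 3 h3
        rwa [show ((3 : ZMod 5) + 2) = 0 from by decide] at this
      -- now H 0 (u 0) (u 4) : u 0 ~ f 0 , u 4 ~ f 2
      have h44 : G.Adj (u 4) (f 2) := by
        rwa [show ((4 : ZMod 5) + 3) = 2 from by decide] at h4
      have := H 0 (u 0) (u 4) (hu1 0) (hu1 4) (hu2 0)
        (by rw [show ((0:ZMod 5) + 2) = 2 from by decide]; exact h44) hP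
      exact tri2 (u 4) 4 0 (by decide) (hu2 4) this
  obtain ⟨i, u, u', hvu, hvu', hufi, hufi2, hnufi2, hnufi⟩ := hA
  have e34 : G.Adj (f (i + 1)) (f (i + 2)) :=
    eadj' (i + 1) (i + 2) (by rw [add_assoc, show (1 : ZMod 5) + 1 = 2 from by decide])
  exact hexagon G v u (f i) (f (i + 1)) (f (i + 2)) u'
    hvu hufi (eadj i) e34 hufi2.symm hvu'.symm
    (hnv i) (hnv (i + 1)) (hnv (i + 2))
    (fun h => tri2 u i (i + 1) rfl hufi h)
    hnufi2
    (fun h => htri v u u' hvu hvu' h)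
    (nfadj i)
    (fun h => hnufi h.symm)
    (fun h => htri u' (f (i + 2)) (f (i + 1)) hufi2 h.symm e34.symm)
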